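/- Let m ≥ 1 and let G be a 2m-partite graph (i.e., a graph whose chromatic number is at most 2m) with e edges. Then τ_B(G) ≤ (m−1)·e/(2m−1). -/

import Mathlib

open SimpleGraph Finset

variable {V : Type*} [Fintype V] [DecidableEq V]

/-- `A` is a triangle-independent edge set of `G`: a set of edges of `G`
containing at most one edge from each triangle of `G`. -/
def IsTriangleIndep (G : SimpleGraph V) (A : Finset (Sym2 V)) : Prop :=
  (A : Set (Sym2 V)) ⊆ G.edgeSet ∧
    ∀ a b c : V, G.Adj a b → G.Adj b c → G.Adj a c →
      ({s(a, b), s(b, c), s(a, c)} ∩ A).card ≤ 1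

/-- `α₁(G)`: the maximum size of a triangle-independent set in `G`. -/
noncomputable def alphaOne (G : SimpleGraph V) : ℕ :=
  sSup {k | ∃ A : Finset (Sym2 V), IsTriangleIndep G A ∧ A.card = k}

/-- `τ_B(G)`: the minimum size of an edge set of `G` whose deletion makes `G` bipartite. -/
noncomputable def tauB (G : SimpleGraph V) : ℕ :=
  sInf {k | ∃ D : Finset (Sym2 V), (D : Set (Sym2 V)) ⊆ G.edgeSet ∧
    (G.deleteEdges (D : Set (Sym2 V))).Colorable 2 ∧ D.card = k}

/-- `b(G)`: the maximum size of a vertex set inducing a bipartite subgraph of `G`. -/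
noncomputable def bipNum (G : SimpleGraph V) : ℕ :=
  sSup {k | ∃ B : Finset V, (G.induce (B : Set V)).Colorable 2 ∧ B.card = k}

/-- Binomial identity: `2 (2n+3) C(2n+2, n) = (n+1) C(2n+4, n+2)`. -/
lemma aux_choose_id (n : ℕ) :
    2 * ((2*n+3) * Nat.choose (2*n+2) n) = (n+1) * Nat.choose (2*n+4) (n+2) := by
  have h1 : (2*n+4) * Nat.choose (2*n+3) (n+1) = Nat.choose (2*n+4) (n+2) * (n+2) := by
    have := Nat.add_one_mul_choose_eq (2*n+3) (n+1)
    simpa [Nat.succ_eq_add_one, Nat.add_assoc] using this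
  have h2 : (2*n+3) * Nat.choose (2*n+2) n = Nat.choose (2*n+3) (n+1) * (n+1) := by
    have := Nat.add_one_mul_choose_eq (2*n+2) n
    simpa [Nat.succ_eq_add_one, Nat.add_assoc] using this
  apply Nat.eq_of_mul_eq_mul_left (show 0 < n+2 by omega)
  calc (n+2) * (2 * ((2*n+3) * Nat.choose (2*n+2) n))
      = (n+2) * (2 * (Nat.choose (2*n+3) (n+1) * (n+1))) := by rw [h2]
    _ = (n+1) * ((2*n+4) * Nat.choose (2*n+3) (n+1)) := by ring
    _ = (n+1) * (Nat.choose (2*n+4) (n+2) * (n+2)) := by rw [h1]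
    _ = (n+2) * ((n+1) * Nat.choose (2*n+4) (n+2)) := by ring

/-- The number of `(n+2)`-subsets of a `(2n+4)`-set which contain both of `i, j` or
neither of them is at most `2 C(2n+2, n)`. -/
lemma aux_count_bad {α : Type*} [DecidableEq α] [Fintype α] (n : ℕ)
    (hcard : Fintype.card α = 2*n+4) (i j : α) (hij : i ≠ j) :
    (((univ : Finset α).powersetCard (n+2)).filter (fun S => (i ∈ S ↔ j ∈ S))).card
      ≤ 2 * Nat.choose (2*n+2) n := by
  classical
  set U : Finset α := (univ.erase i).erase j with hU
  have hUcard : U.card = 2*n+2 := by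
    rw [hU, card_erase_of_mem (by simp [hij.symm]), card_erase_of_mem (by simp)]
    simp [hcard]
  have hsub : ((univ : Finset α).powersetCard (n+2)).filter (fun S => (i ∈ S ↔ j ∈ S)) ⊆
      (((univ : Finset α).powersetCard (n+2)).filter (fun S => i ∈ S ∧ j ∈ S)) ∪
      (((univ : Finset α).powersetCard (n+2)).filter (fun S => i ∉ S ∧ j ∉ S)) := by
    intro S hS
    simp only [mem_filter, mem_union] at hS ⊢
    tauto
  have hcard1 : (((univ : Finset α).powersetCard (n+2)).filter (fun S => i ∈ S ∧ j ∈ S)).card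
      = Nat.choose (2*n+2) n := by
    rw [card_nbij' (fun S => (S.erase i).erase j) (fun T => insert i (insert j T))
      (t := U.powersetCard n) ?_ ?_ ?_ ?_, card_powersetCard, hUcard]
    · intro S hS
      simp only [Finset.mem_coe, mem_filter, mem_powersetCard] at hS ⊢
      obtain ⟨⟨-, hcS⟩, hiS, hjS⟩ := hS
      constructor
      · rw [hU]
        intro x hx
        simp only [mem_erase] at hx ⊢
        exact ⟨hx.1, hx.2.1, mem_univ x⟩
      · rw [card_erase_of_mem (by simp [mem_erase, hij.symm, hjS]),
          card_erase_of_mem hiS, hcS]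
        omega
    · intro T hT
      simp only [Finset.mem_coe, mem_powersetCard, hU] at hT
      obtain ⟨hTsub, hTc⟩ := hT
      have hiT : i ∉ T := fun h => by simpa using (hTsub h)
      have hjT : j ∉ T := fun h => by simpa using (mem_erase.1 (hTsub h)).1
      simp only [Finset.mem_coe, mem_filter, mem_powersetCard]
      refine ⟨⟨subset_univ _, ?_⟩, by simp, by simp⟩
      rw [card_insert_of_notMem (by simp [hiT, hij]), card_insert_of_notMem hjT, hTc]
    · intro S hS
      simp only [Finset.mem_coe, mem_filter] at hS
      obtain ⟨-, hiS, hjS⟩ := hS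
      show insert i (insert j ((S.erase i).erase j)) = S
      rw [insert_erase (by simp [mem_erase, hij.symm, hjS]), insert_erase hiS]
    · intro T hT
      simp only [Finset.mem_coe, mem_powersetCard, hU] at hT
      have hiT : i ∉ T := fun h => by simpa using (hT.1 h)
      have hjT : j ∉ T := fun h => by simpa using (mem_erase.1 (hT.1 h)).1
      show ((insert i (insert j T)).erase i).erase j = T
      rw [erase_insert (by simp [hiT, hij]), erase_insert hjT]
  have hcard2 : (((univ : Finset α).powersetCard (n+2)).filter (fun S => i ∉ S ∧ j ∉ S)).card
      = Nat.choose (2*n+2) n := by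
    have heq : ((univ : Finset α).powersetCard (n+2)).filter (fun S => i ∉ S ∧ j ∉ S)
        = U.powersetCard (n+2) := by
      ext S
      simp only [mem_filter, mem_powersetCard, hU, subset_erase]
      have := subset_univ S
      tauto
    rw [heq, card_powersetCard, hUcard]
    rw [← Nat.choose_symm (by omega : n ≤ 2*n+2)]
    congr 1
    omega
  calc _ ≤ _ := card_le_card hsub
    _ ≤ _ := card_union_le _ _
    _ = 2 * Nat.choose (2*n+2) n := by rw [hcard1, hcard2]; ring

/-- Given a coloring of `G` and a set `S` of colors, deleting the edges whose endpoints
are both `S`-colored or both non-`S`-colored makes `G` bipartite. -/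
lemma aux_tauB_le {V : Type*} [Fintype V] [DecidableEq V]
    (G : SimpleGraph V) [DecidableRel G.Adj]
    {k : ℕ} (c : G.Coloring (Fin k)) (S : Finset (Fin k)) :
    tauB G ≤ (G.edgeFinset.filter
      (fun e => (e.map fun v => decide (c v ∈ S)).IsDiag)).card := by
  apply Nat.sInf_le
  refine ⟨_, ?_, ?_, rfl⟩
  · intro x hx
    simp only [Finset.mem_coe, mem_filter, mem_edgeFinset] at hx
    exact hx.1
  · refine ⟨SimpleGraph.Coloring.mk (fun v => if c v ∈ S then (0 : Fin 2) else 1) ?_⟩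
    intro u v h heq
    rw [SimpleGraph.deleteEdges_adj] at h
    obtain ⟨ha, hd⟩ := h
    apply hd
    simp only [Finset.mem_coe, mem_filter, mem_edgeFinset, mem_edgeSet]
    refine ⟨ha, ?_⟩
    rw [Sym2.map_pair_eq, Sym2.mk_isDiag_iff]
    by_cases hu : c u ∈ S <;> by_cases hv : c v ∈ S <;> simp_all

/-- If `m ≥ 1` and `G` is a `2m`-partite graph (chromatic number at most `2m`) with `e`
edges, then `τ_B(G) ≤ (m - 1) e / (2m - 1)`. -/
theorem tauB_le_of_colorable (m : ℕ) (hm : 1 ≤ m) (G : SimpleGraph V) [DecidableRel G.Adj]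
    (hcol : G.Colorable (2 * m)) :
    (tauB G : ℝ) ≤ ((m : ℝ) - 1) * (G.edgeFinset.card : ℝ) / (2 * (m : ℝ) - 1) := by
  classical
  rcases eq_or_lt_of_le hm with h1 | h2
  · -- case m = 1 : `G` is already bipartite
    subst h1
    norm_num at hcol
    have h0 : tauB G ≤ 0 := by
      refine Nat.sInf_le ⟨∅, by simp, ?_, by simp⟩
      rw [coe_empty, SimpleGraph.deleteEdges_empty]
      exact hcol
    interval_cases h : tauB G
    norm_num
  · -- case m ≥ 2
    obtain ⟨n, rfl⟩ : ∃ n, m = n + 2 := ⟨m - 2, by omega⟩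
    obtain ⟨c⟩ := hcol
    set 𝒮 : Finset (Finset (Fin (2*(n+2)))) := (univ : Finset (Fin (2*(n+2)))).powersetCard (n+2)
      with h𝒮
    set D : Finset (Fin (2*(n+2))) → Finset (Sym2 V) := fun S =>
      G.edgeFinset.filter (fun e => (e.map fun v => decide (c v ∈ S)).IsDiag) with hD
    -- double counting
    have hswap : ∑ S ∈ 𝒮, (D S).card
        = ∑ e ∈ G.edgeFinset, (𝒮.filter (fun S => (e.map fun v => decide (c v ∈ S)).IsDiag)).card := by
      simp only [hD, card_filter]
      rw [Finset.sum_comm]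
    have hedge : ∀ e ∈ G.edgeFinset,
        (𝒮.filter (fun S => (e.map fun v => decide (c v ∈ S)).IsDiag)).card
          ≤ 2 * Nat.choose (2*n+2) n := by
      intro e he
      induction e using Sym2.ind with
      | _ u v =>
        rw [mem_edgeFinset, mem_edgeSet] at he
        have hne : c u ≠ c v := c.valid he
        have hfil : 𝒮.filter (fun S => ((s(u, v) : Sym2 V).map fun v => decide (c v ∈ S)).IsDiag)
            = 𝒮.filter (fun S => (c u ∈ S ↔ c v ∈ S)) := by
          apply filter_congr
          intro S _
          simp only [Sym2.map_pair_eq, Sym2.mk_isDiag_iff, decide_eq_decide]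
        rw [hfil, h𝒮]
        exact aux_count_bad n (by rw [Fintype.card_fin]; omega) (c u) (c v) hne
    have hsum : ∑ S ∈ 𝒮, (D S).card
        ≤ G.edgeFinset.card * (2 * Nat.choose (2*n+2) n) := by
      rw [hswap]
      calc ∑ e ∈ G.edgeFinset, (𝒮.filter (fun S => (e.map fun v => decide (c v ∈ S)).IsDiag)).card
          ≤ G.edgeFinset.card • (2 * Nat.choose (2*n+2) n) :=
            Finset.sum_le_card_nsmul _ _ _ hedge
        _ = G.edgeFinset.card * (2 * Nat.choose (2*n+2) n) := smul_eq_mul _ _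
    -- choose a minimizing S₀
    have h𝒮ne : 𝒮.Nonempty := by
      rw [h𝒮, powersetCard_nonempty]
      simp only [card_univ, Fintype.card_fin]
      omega
    obtain ⟨S₀, hS₀, hmin⟩ := Finset.exists_min_image 𝒮 (fun S => (D S).card) h𝒮ne
    have hlow : 𝒮.card * (D S₀).card ≤ ∑ S ∈ 𝒮, (D S).card := by
      have := Finset.card_nsmul_le_sum 𝒮 (fun S => (D S).card) ((D S₀).card) hmin
      simpa [smul_eq_mul] using this
    have h𝒮card : 𝒮.card = Nat.choose (2*n+4) (n+2) := by
      rw [h𝒮, card_powersetCard, card_univ, Fintype.card_fin]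
      congr 1
    -- the key natural-number inequality
    have hkey : (2*n+3) * (D S₀).card ≤ (n+1) * G.edgeFinset.card := by
      have hpos : 0 < Nat.choose (2*n+4) (n+2) := Nat.choose_pos (by omega)
      apply Nat.le_of_mul_le_mul_left _ hpos
      calc Nat.choose (2*n+4) (n+2) * ((2*n+3) * (D S₀).card)
          = (2*n+3) * (Nat.choose (2*n+4) (n+2) * (D S₀).card) := by ring
        _ ≤ (2*n+3) * (G.edgeFinset.card * (2 * Nat.choose (2*n+2) n)) :=
            Nat.mul_le_mul_left _ ((h𝒮card ▸ hlow).trans hsum)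
        _ = G.edgeFinset.card * (2 * ((2*n+3) * Nat.choose (2*n+2) n)) := by ring
        _ = G.edgeFinset.card * ((n+1) * Nat.choose (2*n+4) (n+2)) := by rw [aux_choose_id n]
        _ = Nat.choose (2*n+4) (n+2) * ((n+1) * G.edgeFinset.card) := by ring
    have htau : tauB G ≤ (D S₀).card := aux_tauB_le G c S₀
    have hfin : (2*n+3) * tauB G ≤ (n+1) * G.edgeFinset.card :=
      le_trans (Nat.mul_le_mul_left _ htau) hkey
    -- pass to the reals
    have hc : ((2*n+3 : ℕ) : ℝ) * (tauB G : ℝ) ≤ ((n+1 : ℕ) : ℝ) * (G.edgeFinset.card : ℝ) := by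
      exact_mod_cast hfin
    have hdpos : (0:ℝ) < 2 * ((n : ℝ) + 2) - 1 := by
      have : (0:ℝ) ≤ (n : ℝ) := Nat.cast_nonneg n
      linarith
    push_cast at hc ⊢
    rw [le_div_iff₀ hdpos]
    calc (tauB G : ℝ) * (2 * ((n : ℝ) + 2) - 1)
        = (2 * (n : ℝ) + 3) * (tauB G : ℝ) := by ring
      _ ≤ ((n : ℝ) + 1) * (G.edgeFinset.card : ℝ) := hc
      _ = ((n : ℝ) + 2 - 1) * (G.edgeFinset.card : ℝ) := by ring
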